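/- For every natural number n ≥ 1, E(f_{n+2}, f_{n+3}, ω^2·f_{n+7}) = −((3·ω + 2)·f_{n+2} + (5·ω + 4)·f_{n+3})·((546·ω + 112)·f_{n+1}^2 + (80·ω + 17)·f_{n−1}^2 − (418·ω + 87)·f_n^2 − (418·ω + 87)·(−1)^n). -/
import Mathlib


/-- Fibonacci numbers as complex numbers. -/
noncomputable def f (n : ℕ) : ℂ := (Nat.fib n : ℂ)

/-- `E x y z = x^3 + y^3 + z^3 - 3xyz`. -/
def E (x y z : ℂ) : ℂ := x ^ 3 + y ^ 3 + z ^ 3 - 3 * x * y * z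

lemma fib_rec (k : ℕ) : f (k + 2) = f k + f (k + 1) := by
  simp [f, Nat.fib_add_two]

lemma fib_catalan (m : ℕ) :
    f m * (f m + f (m + 1)) - f (m + 1) ^ 2 = (-1 : ℂ) ^ (m + 1) := by
  induction m with
  | zero => simp [f]
  | succ k ih =>
      have h2 := fib_rec k
      rw [pow_succ]
      rw [fib_rec k]
      linear_combination (-1 : ℂ) * ih

theorem stmt14 (ω : ℂ) (hω : ω ≠ 1) (hω3 : ω ^ 3 = 1) (n : ℕ) (hn : 1 ≤ n) :
    E (f (n + 2)) (f (n + 3)) (ω ^ 2 * f (n + 7)) =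
      -(((3 * ω + 2) * f (n + 2) + (5 * ω + 4) * f (n + 3)) *
        ((546 * ω + 112) * f (n + 1) ^ 2 + (80 * ω + 17) * f (n - 1) ^ 2 -
          (418 * ω + 87) * f n ^ 2 - (418 * ω + 87) * (-1 : ℂ) ^ n)) := by
  have hq : ω ^ 2 + ω + 1 = 0 := by
    have h : (ω - 1) * (ω ^ 2 + ω + 1) = 0 := by linear_combination hω3
    rcases mul_eq_zero.mp h with h1 | h1
    · exact absurd (sub_eq_zero.mp h1) hω
    · exact h1
  obtain ⟨m, rfl⟩ : ∃ m, n = m + 1 := ⟨n - 1, (Nat.succ_pred_eq_of_pos hn).symm⟩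
  set A := f m with hA
  set B := f (m + 1) with hB
  have hsign : (-1 : ℂ) ^ (m + 1) = A * (A + B) - B ^ 2 := (fib_catalan m).symm
  have e2 : f (m + 2) = A + B := fib_rec m
  have e3 : f (m + 3) = A + 2 * B := by rw [fib_rec (m + 1), e2]; ring
  have e4 : f (m + 4) = 2 * A + 3 * B := by rw [fib_rec (m + 2), e2, e3]; ring
  have e5 : f (m + 5) = 3 * A + 5 * B := by rw [fib_rec (m + 3), e3, e4]; ring
  have e6 : f (m + 6) = 5 * A + 8 * B := by rw [fib_rec (m + 4), e4, e5]; ring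
  have e7 : f (m + 7) = 8 * A + 13 * B := by rw [fib_rec (m + 5), e5, e6]; ring
  have e8 : f (m + 8) = 13 * A + 21 * B := by rw [fib_rec (m + 6), e6, e7]; ring
  have hidx : ∀ k, m + 1 + k = m + (1 + k) := fun k => by ring
  simp only [E, Nat.add_sub_cancel, show m + 1 + 2 = m + 3 from rfl,
    show m + 1 + 3 = m + 4 from rfl, show m + 1 + 7 = m + 8 from rfl,
    show m + 1 + 1 = m + 2 from rfl, e2, e3, e4, e8, hsign, ← hA, ← hB]
  linear_combination ((429 : ℂ) * A^3 + 2084 * A^2*B + 3378 * A*B^2 + 1827 * B^3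
    + 2197 * ω * A^3 + 10647 * ω * A^2*B + 17199 * ω * A*B^2 + 9261 * ω * B^3
    - 2197 * ω^3 * A^3 - 10647 * ω^3 * A^2*B - 17199 * ω^3 * A*B^2 - 9261 * ω^3 * B^3
    + 2197 * ω^4 * A^3 + 10647 * ω^4 * A^2*B + 17199 * ω^4 * A*B^2 + 9261 * ω^4 * B^3) * hq
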